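/- Write A_n^{(r)}(t,q) = ∑_i A^{(r)}_{n,i}(q) t^i. For positive integers i and n with i ≠ rn: ∑_k [n choose k]_{q^r} · A^{(r)}_{k, rn−i−1}(q) = ∑_k [n choose k]_{q^r} · A^{(r)}_{k, i−1}(q). -/

import Mathlib

open Polynomial PowerSeries

/-- The variable `q` in the field `ℚ(q)`. -/
noncomputable def qq : RatFunc ℚ := RatFunc.X

/-- The q-shifted factorial `(q^r;q^r)_n = ∏_{i=1}^n (1 - q^{ri})`. -/
noncomputable def qrfac (r n : ℕ) : RatFunc ℚ :=
  ∏ i ∈ Finset.range n, (1 - (qq ^ r) ^ (i + 1))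

/-- `e(z;q^r) = ∑ z^n/(q^r;q^r)_n`, a power series in `z` over `ℚ(q)[t]`. -/
noncomputable def qexpZr (r : ℕ) : PowerSeries (Polynomial (RatFunc ℚ)) :=
  PowerSeries.mk fun n => Polynomial.C (qrfac r n)⁻¹

/-- `e(t^r z;q^r) = ∑ t^{rn} z^n/(q^r;q^r)_n`. -/
noncomputable def qexpTZr (r : ℕ) : PowerSeries (Polynomial (RatFunc ℚ)) :=
  PowerSeries.mk fun n => Polynomial.X ^ (r * n) * Polynomial.C (qrfac r n)⁻¹

/-- The q-binomial coefficient `[n choose k]_{q^r}`. -/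
noncomputable def qbinomr (r n k : ℕ) : RatFunc ℚ :=
  if k ≤ n then qrfac r n / (qrfac r (n - k) * qrfac r k) else 0

lemma qrfac_ne_zero (r : ℕ) (hr : 1 ≤ r) (n : ℕ) : qrfac r n ≠ 0 := by
  unfold qrfac
  rw [Finset.prod_ne_zero_iff]
  intro i _
  rw [sub_ne_zero]
  intro h
  have : (algebraMap (Polynomial ℚ) (RatFunc ℚ)) 1
      = algebraMap (Polynomial ℚ) _ (Polynomial.X ^ (r * (i+1))) := by
    simpa [qq, map_pow, pow_mul, RatFunc.algebraMap_X] using h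
  have h2 := RatFunc.algebraMap_injective (K := ℚ) this
  have : (Polynomial.X ^ (r * (i+1)) : Polynomial ℚ).natDegree = 0 := by rw [← h2]; simp
  simp [Polynomial.natDegree_X_pow] at this
  omega

lemma qbinom_mul (r : ℕ) {n k : ℕ} (hk : k ≤ n) :
    qrfac r n * ((qrfac r (n - k))⁻¹ * (qrfac r k)⁻¹) = qbinomr r n k := by
  rw [qbinomr, if_pos hk, div_eq_mul_inv, mul_inv]

lemma qbinom_nn (r : ℕ) (hr : 1 ≤ r) (n : ℕ) : qbinomr r n n = 1 := by
  rw [qbinomr, if_pos le_rfl, Nat.sub_self]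
  rw [show qrfac r 0 = 1 from Finset.prod_range_zero _, one_mul,
    div_self (qrfac_ne_zero r hr n)]

lemma star (r : ℕ) (hr : 1 ≤ r) (A : ℕ → Polynomial (RatFunc ℚ))
    (hA : (qexpTZr r - PowerSeries.C (R := Polynomial (RatFunc ℚ)) Polynomial.X * qexpZr r) *
        PowerSeries.mk (fun n => A n * Polynomial.C (qrfac r n)⁻¹) =
      qexpZr r - qexpTZr r) (n : ℕ) :
    ∑ k ∈ Finset.range (n + 1),
      Polynomial.C (qbinomr r n k) * ((Polynomial.X ^ (r * (n - k)) - Polynomial.X) * A k)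
      = 1 - Polynomial.X ^ (r * n) := by
  have h := congrArg (PowerSeries.coeff n) hA
  rw [PowerSeries.coeff_mul, Finset.Nat.sum_antidiagonal_eq_sum_range_succ_mk] at h
  simp only [map_sub, PowerSeries.coeff_mk, qexpZr, qexpTZr, PowerSeries.coeff_C_mul] at h
  rw [← Finset.sum_range_reflect] at h
  have hfn := qrfac_ne_zero r hr n
  calc ∑ k ∈ Finset.range (n + 1),
      Polynomial.C (qbinomr r n k) * ((Polynomial.X ^ (r * (n - k)) - Polynomial.X) * A k)
      = ∑ j ∈ Finset.range (n + 1), Polynomial.C (qrfac r n) *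
          ((Polynomial.X ^ (r * (n.succ - 1 - j)) * Polynomial.C (qrfac r (n.succ - 1 - j))⁻¹ -
            Polynomial.X * Polynomial.C (qrfac r (n.succ - 1 - j))⁻¹) *
           (A (n - (n.succ - 1 - j)) * Polynomial.C (qrfac r (n - (n.succ - 1 - j)))⁻¹)) := by
        refine Finset.sum_congr rfl fun k hk => ?_
        have hk' : k ≤ n := by simpa [Nat.lt_succ_iff] using hk
        have e1 : n.succ - 1 - k = n - k := by omega
        have e2 : n - (n - k) = k := by omega
        rw [e1, e2, ← qbinom_mul r hk', map_mul, map_mul]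
        ring
    _ = Polynomial.C (qrfac r n) *
        (Polynomial.C (qrfac r n)⁻¹ - Polynomial.X ^ (r * n) * Polynomial.C (qrfac r n)⁻¹) := by
        rw [← Finset.mul_sum, h]
    _ = 1 - Polynomial.X ^ (r * n) := by
        rw [mul_sub, ← map_mul, mul_inv_cancel₀ hfn, map_one, mul_comm (Polynomial.X ^ (r*n)) _,
          ← mul_assoc, ← map_mul, mul_inv_cancel₀ hfn, map_one, one_mul]

lemma reflect_sum {R : Type*} [Semiring R] (N : ℕ) (s : Finset ℕ) (f : ℕ → R[X]) :
    reflect N (∑ k ∈ s, f k) = ∑ k ∈ s, reflect N (f k) := by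
  induction s using Finset.cons_induction with
  | empty => simp [reflect_zero]
  | cons a s ha ih => rw [Finset.sum_cons, Finset.sum_cons, reflect_add, ih]

lemma oneX_ne : (1 - Polynomial.X : Polynomial (RatFunc ℚ)) ≠ 0 := by
  intro h
  have := congrArg (fun p => Polynomial.coeff p 1) h
  norm_num [Polynomial.coeff_one] at this

lemma natDegree_oneX : (1 - Polynomial.X : Polynomial (RatFunc ℚ)).natDegree = 1 := by
  have : (1 - Polynomial.X : Polynomial (RatFunc ℚ)) = -(Polynomial.X - Polynomial.C 1) := by
    simp [neg_sub]
  rw [this, natDegree_neg, natDegree_X_sub_C]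

lemma A_zero (r : ℕ) (hr : 1 ≤ r) (A : ℕ → Polynomial (RatFunc ℚ))
    (hstar : ∀ n, ∑ k ∈ Finset.range (n + 1),
      Polynomial.C (qbinomr r n k) * ((Polynomial.X ^ (r * (n - k)) - Polynomial.X) * A k)
      = 1 - Polynomial.X ^ (r * n)) : A 0 = 0 := by
  have h := hstar 0
  rw [Finset.sum_range_one, qbinom_nn r hr 0, map_one, one_mul] at h
  simp only [Nat.sub_self, Nat.mul_zero, pow_zero, sub_self] at h
  rcases mul_eq_zero.mp h with h' | h'
  · exact absurd h' oneX_ne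
  · exact h'

lemma pal (r : ℕ) (hr : 1 ≤ r) (A : ℕ → Polynomial (RatFunc ℚ)) (hA0 : A 0 = 0)
    (hstar : ∀ n, ∑ k ∈ Finset.range (n + 1),
      Polynomial.C (qbinomr r n k) * ((Polynomial.X ^ (r * (n - k)) - Polynomial.X) * A k)
      = 1 - Polynomial.X ^ (r * n)) :
    ∀ n, (A n).natDegree ≤ r * n - 1 ∧ reflect (r * n - 1) (A n) = A n := by
  intro n
  induction n using Nat.strong_induction_on with
  | _ n ih =>
  match n, ih with
  | 0, _ => simp [hA0]
  | (m+1), ih =>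
  set n := m + 1 with hn
  have hrn : 1 ≤ r * n := by have : 1 * 1 ≤ r * n := Nat.mul_le_mul hr (by omega); omega
  have h := hstar n
  rw [Finset.sum_range_succ, qbinom_nn r hr n, Nat.sub_self, Nat.mul_zero, pow_zero, map_one,
    one_mul] at h
  have key : (1 - Polynomial.X) * A n =
      (1 - Polynomial.X ^ (r * n)) - ∑ k ∈ Finset.range n,
        Polynomial.C (qbinomr r n k) * ((Polynomial.X ^ (r * (n - k)) - Polynomial.X) * A k) := by
    rw [← h]; ring
  have hterm_deg : ∀ k ∈ Finset.range n,
      (Polynomial.C (qbinomr r n k) * ((Polynomial.X ^ (r * (n - k)) - Polynomial.X) * A k)).natDegree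
        ≤ r * n := by
    intro k hk
    have hk' : k < n := Finset.mem_range.mp hk
    have hAk := (ih k hk').1
    calc (Polynomial.C (qbinomr r n k) * ((Polynomial.X ^ (r * (n - k)) - Polynomial.X) * A k)).natDegree
        ≤ (Polynomial.C (qbinomr r n k)).natDegree +
          ((Polynomial.X ^ (r * (n - k)) - Polynomial.X : Polynomial (RatFunc ℚ)) * A k).natDegree :=
          natDegree_mul_le
      _ ≤ 0 + (((Polynomial.X ^ (r * (n - k)) - Polynomial.X : Polynomial (RatFunc ℚ))).natDegree
            + (A k).natDegree) := by
          exact Nat.add_le_add (le_of_eq (natDegree_C _)) natDegree_mul_le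
      _ ≤ r * n := by
          have h1 : ((Polynomial.X ^ (r * (n - k)) - Polynomial.X : Polynomial (RatFunc ℚ))).natDegree
              ≤ r * (n - k) := by
            refine (natDegree_sub_le _ _).trans ?_
            simp [natDegree_X_pow]
            have : 1 * 1 ≤ r * (n - k) := Nat.mul_le_mul hr (by omega)
            omega
          have h2 : r * (n - k) + r * k = r * n := by
            rw [← Nat.mul_add]; congr 1; omega
          have h3 : r * k - 1 ≤ r * k := Nat.sub_le _ _
          omega
  have hdeg : (A n).natDegree ≤ r * n - 1 := by
    by_cases hz : A n = 0
    · simp [hz]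
    · have hD : ((1 - Polynomial.X) * A n).natDegree ≤ r * n := by
        rw [key]
        refine (natDegree_sub_le _ _).trans ?_
        refine max_le ?_ ?_
        · refine (natDegree_sub_le _ _).trans ?_
          simp [natDegree_X_pow]
        · exact natDegree_sum_le_of_forall_le _ _ hterm_deg
      rw [natDegree_mul oneX_ne hz, natDegree_oneX] at hD
      omega
  refine ⟨hdeg, ?_⟩
  have hrefl_term : ∀ k ∈ Finset.range n,
      reflect (r * n) (Polynomial.C (qbinomr r n k) * ((Polynomial.X ^ (r * (n - k)) - Polynomial.X) * A k))
        = -(Polynomial.C (qbinomr r n k) * ((Polynomial.X ^ (r * (n - k)) - Polynomial.X) * A k)) := by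
    intro k hk
    have hk' : k < n := Finset.mem_range.mp hk
    rcases Nat.eq_zero_or_pos k with rfl | hkpos
    · simp [hA0]
    · have hAk := ih k hk'
      have ha1 : 1 ≤ r * (n - k) := by
        have : 1 * 1 ≤ r * (n - k) := Nat.mul_le_mul hr (by omega); omega
      have hsplit : (r * (n - k) + 1) + (r * k - 1) = r * n := by
        have h2 : r * (n - k) + r * k = r * n := by rw [← Nat.mul_add]; congr 1; omega
        have : 1 ≤ r * k := by have : 1 * 1 ≤ r * k := Nat.mul_le_mul hr hkpos; omega
        omega
      rw [reflect_C_mul, ← hsplit,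
        reflect_mul _ _ (by
          refine (natDegree_sub_le _ _).trans ?_
          simp [natDegree_X_pow]) hAk.1,
        hAk.2]
      have : reflect (r * (n - k) + 1) (Polynomial.X ^ (r * (n - k)) - Polynomial.X : Polynomial (RatFunc ℚ))
          = -(Polynomial.X ^ (r * (n - k)) - Polynomial.X) := by
        nth_rewrite 2 [show (Polynomial.X : Polynomial (RatFunc ℚ)) = Polynomial.X ^ 1 by rw [pow_one]]
        rw [reflect_sub, reflect_monomial, reflect_monomial,
          revAt_le (by omega), revAt_le (by omega)]
        simp [pow_one]
      rw [this]
      ring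
  have hreflRHS : reflect (r * n) ((1 - Polynomial.X) * A n)
      = -((1 - Polynomial.X) * A n) := by
    rw [key, reflect_sub, reflect_sub, reflect_one, reflect_monomial, revAt_le le_rfl,
      Nat.sub_self, pow_zero, reflect_sum, Finset.sum_congr rfl hrefl_term]
    rw [Finset.sum_neg_distrib]
    ring
  have hreflL : reflect (r * n) ((1 - Polynomial.X) * A n)
      = (Polynomial.X - 1) * reflect (r * n - 1) (A n) := by
    have hm := reflect_mul (1 - Polynomial.X) (A n) (F := 1) (G := r * n - 1)
      natDegree_oneX.le hdeg
    rw [show 1 + (r * n - 1) = r * n by omega] at hm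
    rw [hm]
    congr 1
    rw [show (1 - Polynomial.X : Polynomial (RatFunc ℚ)) = Polynomial.X ^ 0 - Polynomial.X ^ 1 by
      simp]
    rw [reflect_sub, reflect_monomial, reflect_monomial, revAt_le (by omega), revAt_le (by omega)]
    simp
  have final : (Polynomial.X - 1) * reflect (r * n - 1) (A n) = (Polynomial.X - 1) * A n := by
    rw [← hreflL, hreflRHS]; ring
  exact mul_left_cancel₀ (by
    intro h
    have := congrArg (fun p => Polynomial.coeff p 1) h
    norm_num [Polynomial.coeff_one] at this) final

theorem main (r : ℕ) (A : ℕ → Polynomial (RatFunc ℚ)) (hr' : 1 ≤ r) (hA0 : A 0 = 0)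
    (hstar : ∀ n, ∑ k ∈ Finset.range (n + 1),
      Polynomial.C (qbinomr r n k) * ((Polynomial.X ^ (r * (n - k)) - Polynomial.X) * A k)
      = 1 - Polynomial.X ^ (r * n))
    (hpal : ∀ n, (A n).natDegree ≤ r * n - 1 ∧ reflect (r * n - 1) (A n) = A n)
    (n i : ℕ) (hn : 0 < n) (hi : 0 < i) (hirn : i ≠ r * n) :
    (∑ k ∈ Finset.range (n + 1),
        if i < r * n then qbinomr r n k * (A k).coeff (r * n - i - 1) else 0) =
    ∑ k ∈ Finset.range (n + 1), qbinomr r n k * (A k).coeff (i - 1) := by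
  have hs : ∀ m : ℕ, ∑ k ∈ Finset.range (n + 1),
      (qbinomr r n k * (if r * (n - k) ≤ m then (A k).coeff (m - r * (n - k)) else 0)
        - qbinomr r n k * (if 1 ≤ m then (A k).coeff (m - 1) else 0))
      = (1 : Polynomial (RatFunc ℚ)).coeff m - (Polynomial.X ^ (r * n) : Polynomial (RatFunc ℚ)).coeff m := by
    intro m
    have h := congrArg (fun p => Polynomial.coeff p m) (hstar n)
    simp only [Polynomial.coeff_sub] at h
    rw [Polynomial.finset_sum_coeff] at h
    rw [← h]
    refine Finset.sum_congr rfl fun k hk => ?_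
    have e : Polynomial.C (qbinomr r n k) * ((Polynomial.X ^ (r * (n - k)) - Polynomial.X) * A k)
        = (Polynomial.C (qbinomr r n k) * A k) * Polynomial.X ^ (r * (n - k))
          - (Polynomial.C (qbinomr r n k) * A k) * Polynomial.X ^ 1 := by ring
    rw [e, Polynomial.coeff_sub, Polynomial.coeff_mul_X_pow', Polynomial.coeff_mul_X_pow']
    simp only [Polynomial.coeff_C_mul]
    congr 1 <;> split_ifs <;> simp
  have hcoeffsymm : ∀ k, 1 ≤ k → ∀ j, j ≤ r * k - 1 →
      (A k).coeff j = (A k).coeff (r * k - 1 - j) := by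
    intro k hk j hj
    conv_lhs => rw [← (hpal k).2]
    rw [Polynomial.coeff_reflect, revAt_le hj]
  by_cases hilt : i < r * n
  · simp only [if_pos hilt]
    have h := hs i
    rw [Polynomial.coeff_one, if_neg (by omega), Polynomial.coeff_X_pow, if_neg (by omega),
      sub_zero] at h
    rw [Finset.sum_sub_distrib, sub_eq_zero] at h
    calc ∑ k ∈ Finset.range (n + 1), qbinomr r n k * (A k).coeff (r * n - i - 1)
        = ∑ k ∈ Finset.range (n + 1),
            qbinomr r n k * (if r * (n - k) ≤ i then (A k).coeff (i - r * (n - k)) else 0) := by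
          refine Finset.sum_congr rfl fun k hk => ?_
          have hk' : k ≤ n := by simpa [Nat.lt_succ_iff] using hk
          rcases Nat.eq_zero_or_pos k with rfl | hkpos
          · simp [hA0]
          · have hak : r * (n - k) + r * k = r * n := by rw [← Nat.mul_add]; congr 1; omega
            have hk1 : 1 ≤ r * k := by have := Nat.mul_le_mul hr' hkpos; omega
            split_ifs with hle
            · rw [hcoeffsymm k hkpos (i - r * (n - k)) (by omega),
                show r * k - 1 - (i - r * (n - k)) = r * n - i - 1 by omega]
            · rw [Polynomial.coeff_eq_zero_of_natDegree_lt
                (lt_of_le_of_lt (hpal k).1 (by omega))]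
      _ = ∑ k ∈ Finset.range (n + 1),
            qbinomr r n k * (if 1 ≤ i then (A k).coeff (i - 1) else 0) := h
      _ = ∑ k ∈ Finset.range (n + 1), qbinomr r n k * (A k).coeff (i - 1) := by
          refine Finset.sum_congr rfl fun k hk => ?_
          rw [if_pos (show 1 ≤ i by omega)]
  · have higt : r * n < i := by omega
    have h := hs i
    rw [Polynomial.coeff_one, if_neg (by omega), Polynomial.coeff_X_pow, if_neg (by omega),
      sub_zero] at h
    have hz : ∀ k ∈ Finset.range (n + 1),
        (qbinomr r n k * (if r * (n - k) ≤ i then (A k).coeff (i - r * (n - k)) else 0)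
          - qbinomr r n k * (if 1 ≤ i then (A k).coeff (i - 1) else 0))
        = - (qbinomr r n k * (A k).coeff (i - 1)) := by
      intro k hk
      have hk' : k ≤ n := by simpa [Nat.lt_succ_iff] using hk
      rw [if_pos (show 1 ≤ i by omega)]
      have hfirst : (if r * (n - k) ≤ i then (A k).coeff (i - r * (n - k)) else 0) = 0 := by
        split_ifs with hle
        · rcases Nat.eq_zero_or_pos k with rfl | hkpos
          · simp [hA0]
          · refine Polynomial.coeff_eq_zero_of_natDegree_lt (lt_of_le_of_lt (hpal k).1 ?_)
            have hak : r * (n - k) + r * k = r * n := by rw [← Nat.mul_add]; congr 1; omega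
            have hk1 : 1 ≤ r * k := by have := Nat.mul_le_mul hr' hkpos; omega
            omega
        · rfl
      rw [hfirst]
      ring
    rw [Finset.sum_congr rfl hz, Finset.sum_neg_distrib, neg_eq_zero] at h
    have hzz : (∑ k ∈ Finset.range (n + 1),
        if i < r * n then qbinomr r n k * (A k).coeff (r * n - i - 1) else 0) = 0 := by
      simp [hilt]
    rw [hzz]
    exact h.symm

/-- With `A k = A_k^{(r)}(t,q)` defined by the generating function
(cross-multiplied form) and `A^{(r)}_{k,i}(q)` the coefficient of `t^i`
(zero for negative `i`): for positive integers `i, n` with `i ≠ rn`,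
`∑_k [n choose k]_{q^r} A^{(r)}_{k,rn−i−1}(q) = ∑_k [n choose k]_{q^r} A^{(r)}_{k,i−1}(q)`.
(The q-binomial vanishes for `k > n`.) -/
theorem colored_symmetrical_identity (r : ℕ) (hr : 1 ≤ r)
    (A : ℕ → Polynomial (RatFunc ℚ))
    (hA : (qexpTZr r - PowerSeries.C (R := Polynomial (RatFunc ℚ)) Polynomial.X * qexpZr r) *
        PowerSeries.mk (fun n => A n * Polynomial.C (qrfac r n)⁻¹) =
      qexpZr r - qexpTZr r)
    (n i : ℕ) (hn : 0 < n) (hi : 0 < i) (hirn : i ≠ r * n) :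
    (∑ k ∈ Finset.range (n + 1),
        if i < r * n then qbinomr r n k * (A k).coeff (r * n - i - 1) else 0) =
    ∑ k ∈ Finset.range (n + 1), qbinomr r n k * (A k).coeff (i - 1) := by
  have hstar := star r hr A hA
  have hA0 := A_zero r hr A hstar
  exact main r A hr hA0 hstar (pal r hr A hA0 hstar) n i hn hi hirn
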